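/- Let Δ₁, Δ₂ be real numbers (or integers) with Δ₂ ≥ 2 and Δ₁ ≥ 2Δ₂ + 3, and let L₆ be the symmetric 4×4 matrix with rows (Δ₁, -1, -1, 0), (-1, Δ₂, -1, -1), (-1, -1, Δ₂-1, -1), (0, -1, -1, Δ₂-1), and let L₇ be the symmetric 4×4 matrix with rows (Δ₁, -1, -1, 0), (-1, Δ₂, -1, -1), (-1, -1, Δ₂-1, 0), (0, -1, 0, Δ₂-1). Then the second largest eigenvalues of L₆ and of L₇ are each strictly greater than Δ₂ + 1/2. -/
import Mathlib


open Finset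

/-- The `k`-th largest element (1-indexed) of a multiset of reals, with default `0`. -/
noncomputable def kthLargestR (s : Multiset ℝ) (k : ℕ) : ℝ :=
  (s.sort (· ≤ ·)).reverse.getD (k - 1) 0

/-- The second largest eigenvalue (i.e. second largest root, with multiplicity, of the
characteristic polynomial) of a square real matrix. -/
noncomputable def secondLargestEig {k : ℕ} (M : Matrix (Fin k) (Fin k) ℝ) : ℝ :=
  kthLargestR M.charpoly.roots 2

lemma kthLargestR_two_gt {s : Multiset ℝ} {a r₁ r₂ : ℝ} (h1 : r₁ ∈ s) (h2 : r₂ ∈ s)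
    (hne : r₁ ≠ r₂) (ha1 : a < r₁) (ha2 : a < r₂) : a < kthLargestR s 2 := by
  classical
  set l := s.sort (· ≤ ·) with hl
  have hs : l.Pairwise (· ≤ ·) := s.pairwise_sort _
  have hm1 : r₁ ∈ l := by rw [hl, Multiset.mem_sort]; exact h1
  have hm2 : r₂ ∈ l := by rw [hl, Multiset.mem_sort]; exact h2
  obtain ⟨i, hi⟩ := List.mem_iff_get.1 hm1
  obtain ⟨j, hj⟩ := List.mem_iff_get.1 hm2
  have hij : i ≠ j := by
    intro h; apply hne; rw [← hi, ← hj, h]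
  -- the smaller of the two indices
  have key : ∀ i j : Fin l.length, i < j → a < l.get i → a < kthLargestR s 2 := by
    intro i j hlt hai
    have hlen : 2 ≤ l.length := by omega
    have h2len : l.length - 2 < l.length := by omega
    have hile : (i : ℕ) ≤ l.length - 2 := by omega
    have hmono : l.get i ≤ l.get ⟨l.length - 2, h2len⟩ :=
      hs.rel_get_of_le hile
    have hrev : kthLargestR s 2 = l.get ⟨l.length - 2, h2len⟩ := by
      have h1len : 1 < l.reverse.length := by
        rw [List.length_reverse]; omega
      unfold kthLargestR
      rw [← hl]
      rw [List.getD_eq_getElem _ _ h1len]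
      rw [List.getElem_reverse]
      simp only [List.get_eq_getElem]
      rfl
    rw [hrev]
    exact lt_of_lt_of_le hai hmono
  rcases lt_or_gt_of_ne hij with h | h
  · exact key i j h (by rw [hi]; exact ha1)
  · exact key j i h (by rw [hj]; exact ha2)

open Polynomial in
lemma roots_two_gt {p : Polynomial ℝ} (hp : p ≠ 0) {a b c : ℝ} (hab : a < b) (hbc : b < c)
    (ha : 0 < p.eval a) (hb : p.eval b < 0) (hc : 0 < p.eval c) :
    a < kthLargestR p.roots 2 := by
  have hcont : ∀ s : Set ℝ, ContinuousOn (fun x => p.eval x) s :=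
    fun s => (Polynomial.continuous p).continuousOn
  obtain ⟨r₁, hr₁, hr₁0⟩ := intermediate_value_Ioo' hab.le (hcont _) (Set.mem_Ioo.2 ⟨hb, ha⟩)
  obtain ⟨r₂, hr₂, hr₂0⟩ := intermediate_value_Ioo hbc.le (hcont _) (Set.mem_Ioo.2 ⟨hb, hc⟩)
  refine kthLargestR_two_gt (r₁ := r₁) (r₂ := r₂) ?_ ?_ ?_ hr₁.1 (hab.trans hr₂.1)
  · exact (Polynomial.mem_roots hp).2 hr₁0
  · exact (Polynomial.mem_roots hp).2 hr₂0
  · exact ne_of_lt (hr₁.2.trans hr₂.1)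

open Polynomial Matrix in
lemma eval_charpoly_aux {n : ℕ} (M : Matrix (Fin n) (Fin n) ℝ) (x : ℝ) :
    (M.charpoly).eval x = (x • (1 : Matrix (Fin n) (Fin n) ℝ) - M).det := by
  have hmap : (charmatrix M).map (eval x) = x • (1 : Matrix (Fin n) (Fin n) ℝ) - M := by
    ext i j
    by_cases h : i = j
    · subst h
      simp [charmatrix_apply_eq, Matrix.one_apply]
    · simp [charmatrix_apply_ne _ _ _ h, Matrix.one_apply, h]
  have h := RingHom.map_det (evalRingHom x) (charmatrix M)
  rw [Matrix.charpoly]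
  rw [show (eval x) (charmatrix M).det = (evalRingHom x) (charmatrix M).det from rfl, h,
    RingHom.mapMatrix_apply, Polynomial.coe_evalRingHom, hmap]

set_option maxHeartbeats 2000000 in
/-- For reals `Δ₂ ≥ 2` and `Δ₁ ≥ 2Δ₂ + 3`, the second largest eigenvalues
of the matrices `L₆` and `L₇` are each strictly greater than `Δ₂ + 1/2`. -/
theorem stmt17 (Δ₁ Δ₂ : ℝ) (h₂ : 2 ≤ Δ₂) (h₁ : 2 * Δ₂ + 3 ≤ Δ₁) :
    secondLargestEig !![Δ₁, -1, -1, 0;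
                        -1, Δ₂, -1, -1;
                        -1, -1, Δ₂ - 1, -1;
                        0, -1, -1, Δ₂ - 1] > Δ₂ + 1 / 2 ∧
      secondLargestEig !![Δ₁, -1, -1, 0;
                          -1, Δ₂, -1, -1;
                          -1, -1, Δ₂ - 1, 0;
                          0, -1, 0, Δ₂ - 1] > Δ₂ + 1 / 2 := by
  have hd : (5 : ℝ) ≤ Δ₁ - Δ₂ := by linarith
  constructor
  · unfold secondLargestEig
    apply roots_two_gt (b := Δ₂ + 2) (c := Δ₁ + 3)
      ((Matrix.charpoly_monic _).ne_zero)
      (by linarith) (by linarith)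
    · rw [eval_charpoly_aux]
      have hM : (Δ₂ + 1/2) • (1:Matrix (Fin 4) (Fin 4) ℝ)
            - !![Δ₁, -1, -1, 0; -1, Δ₂, -1, -1; -1, -1, Δ₂ - 1, -1; 0, -1, -1, Δ₂ - 1]
          = !![Δ₂ + 1/2 - Δ₁, 1, 1, 0; 1, 1/2, 1, 1; 1, 1, 3/2, 1; 0, 1, 1, 3/2] := by
        ext i j
        fin_cases i <;> fin_cases j <;>
          simp [Matrix.one_apply, Matrix.vecHead, Matrix.vecTail] <;> ring
      rw [hM]
      simp [Matrix.det_succ_row_zero, Fin.sum_univ_succ, Matrix.submatrix_apply, Fin.succAbove]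
      nlinarith [h₁, h₂]
    · rw [eval_charpoly_aux]
      have hM : (Δ₂ + 2) • (1:Matrix (Fin 4) (Fin 4) ℝ)
            - !![Δ₁, -1, -1, 0; -1, Δ₂, -1, -1; -1, -1, Δ₂ - 1, -1; 0, -1, -1, Δ₂ - 1]
          = !![Δ₂ + 2 - Δ₁, 1, 1, 0; 1, 2, 1, 1; 1, 1, 3, 1; 0, 1, 1, 3] := by
        ext i j
        fin_cases i <;> fin_cases j <;>
          simp [Matrix.one_apply, Matrix.vecHead, Matrix.vecTail] <;> ring
      rw [hM]
      simp [Matrix.det_succ_row_zero, Fin.sum_univ_succ, Matrix.submatrix_apply, Fin.succAbove]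
      nlinarith [h₁, h₂]
    · rw [eval_charpoly_aux]
      have hM : (Δ₁ + 3) • (1:Matrix (Fin 4) (Fin 4) ℝ)
            - !![Δ₁, -1, -1, 0; -1, Δ₂, -1, -1; -1, -1, Δ₂ - 1, -1; 0, -1, -1, Δ₂ - 1]
          = !![3, 1, 1, 0; 1, Δ₁ + 3 - Δ₂, 1, 1; 1, 1, Δ₁ + 4 - Δ₂, 1; 0, 1, 1, Δ₁ + 4 - Δ₂] := by
        ext i j
        fin_cases i <;> fin_cases j <;>
          simp [Matrix.one_apply, Matrix.vecHead, Matrix.vecTail] <;> ring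
      rw [hM]
      simp [Matrix.det_succ_row_zero, Fin.sum_univ_succ, Matrix.submatrix_apply, Fin.succAbove]
      nlinarith [hd, sq_nonneg (Δ₁ - Δ₂),
        mul_nonneg (sq_nonneg (Δ₁ - Δ₂)) (by linarith : (0:ℝ) ≤ Δ₁ - Δ₂)]
  · unfold secondLargestEig
    apply roots_two_gt (b := Δ₂ + 2) (c := Δ₁ + 3)
      ((Matrix.charpoly_monic _).ne_zero)
      (by linarith) (by linarith)
    · rw [eval_charpoly_aux]
      have hM : (Δ₂ + 1/2) • (1:Matrix (Fin 4) (Fin 4) ℝ)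
            - !![Δ₁, -1, -1, 0; -1, Δ₂, -1, -1; -1, -1, Δ₂ - 1, 0; 0, -1, 0, Δ₂ - 1]
          = !![Δ₂ + 1/2 - Δ₁, 1, 1, 0; 1, 1/2, 1, 1; 1, 1, 3/2, 0; 0, 1, 0, 3/2] := by
        ext i j
        fin_cases i <;> fin_cases j <;>
          simp [Matrix.one_apply, Matrix.vecHead, Matrix.vecTail] <;> ring
      rw [hM]
      simp [Matrix.det_succ_row_zero, Fin.sum_univ_succ, Matrix.submatrix_apply, Fin.succAbove]
      nlinarith [h₁, h₂]
    · rw [eval_charpoly_aux]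
      have hM : (Δ₂ + 2) • (1:Matrix (Fin 4) (Fin 4) ℝ)
            - !![Δ₁, -1, -1, 0; -1, Δ₂, -1, -1; -1, -1, Δ₂ - 1, 0; 0, -1, 0, Δ₂ - 1]
          = !![Δ₂ + 2 - Δ₁, 1, 1, 0; 1, 2, 1, 1; 1, 1, 3, 0; 0, 1, 0, 3] := by
        ext i j
        fin_cases i <;> fin_cases j <;>
          simp [Matrix.one_apply, Matrix.vecHead, Matrix.vecTail] <;> ring
      rw [hM]
      simp [Matrix.det_succ_row_zero, Fin.sum_univ_succ, Matrix.submatrix_apply, Fin.succAbove]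
      nlinarith [h₁, h₂]
    · rw [eval_charpoly_aux]
      have hM : (Δ₁ + 3) • (1:Matrix (Fin 4) (Fin 4) ℝ)
            - !![Δ₁, -1, -1, 0; -1, Δ₂, -1, -1; -1, -1, Δ₂ - 1, 0; 0, -1, 0, Δ₂ - 1]
          = !![3, 1, 1, 0; 1, Δ₁ + 3 - Δ₂, 1, 1; 1, 1, Δ₁ + 4 - Δ₂, 0; 0, 1, 0, Δ₁ + 4 - Δ₂] := by
        ext i j
        fin_cases i <;> fin_cases j <;>
          simp [Matrix.one_apply, Matrix.vecHead, Matrix.vecTail] <;> ring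
      rw [hM]
      simp [Matrix.det_succ_row_zero, Fin.sum_univ_succ, Matrix.submatrix_apply, Fin.succAbove]
      nlinarith [hd, sq_nonneg (Δ₁ - Δ₂),
        mul_nonneg (sq_nonneg (Δ₁ - Δ₂)) (by linarith : (0:ℝ) ≤ Δ₁ - Δ₂)]
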